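/- Let K be the 4×4 skew matrix with K² = −I₄ as above, and let J₆ be the standard 6×6 symplectic matrix. The set of 24×24 symmetric matrices of the form M = S ⊗ I₄ + A ⊗ K, with S symmetric 6×6 and A antisymmetric 6×6, is closed under the bracket M ∗ N = M(J₆⊗I₄)N − N(J₆⊗I₄)M; explicitly, for M = Ã⊗I₄ + Ǎ⊗K and N = B̃⊗I₄ + B̌⊗K (Ã,B̃ symmetric, Ǎ,B̌ antisymmetric), M ∗ N = 2[ÃJ₆B̃ − ǍJ₆B̌]_sym ⊗ I₄ + 2[ǍJ₆B̃ + ÃJ₆B̌]_skew ⊗ K. -/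

import Mathlib

open Matrix Kronecker

noncomputable section

def Kmat : Matrix (Fin 4) (Fin 4) ℝ :=
  !![0,0,0,-1; 0,0,1,0; 0,-1,0,0; 1,0,0,0]

/-- Symmetric part of a matrix. -/
def symPart {n : Type*} [Fintype n] (A : Matrix n n ℝ) : Matrix n n ℝ :=
  (2 : ℝ)⁻¹ • (A + Aᵀ)

/-- Antisymmetric part of a matrix. -/
def skewPart {n : Type*} [Fintype n] (A : Matrix n n ℝ) : Matrix n n ℝ :=
  (2 : ℝ)⁻¹ • (A - Aᵀ)

lemma Kmat_sq : Kmat * Kmat = -1 := by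
  ext i j
  fin_cases i <;> fin_cases j <;>
    norm_num [Kmat, Matrix.mul_apply, Fin.sum_univ_four, Matrix.one_apply,
      Matrix.vecHead, Matrix.vecTail, Fin.ext_iff, Matrix.cons_val_two, Matrix.cons_val_three]

lemma neg_kron {l m n p : Type*} (A : Matrix l m ℝ) (B : Matrix n p ℝ) :
    (-A) ⊗ₖ B = -(A ⊗ₖ B) := by
  ext ⟨i, k⟩ ⟨j, l⟩; simp [Matrix.kroneckerMap_apply]

lemma kron_neg {l m n p : Type*} (A : Matrix l m ℝ) (B : Matrix n p ℝ) :
    A ⊗ₖ (-B) = -(A ⊗ₖ B) := by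
  ext ⟨i, k⟩ ⟨j, l⟩; simp [Matrix.kroneckerMap_apply]

lemma sub_kron {l m n p : Type*} (A B : Matrix l m ℝ) (C : Matrix n p ℝ) :
    (A - B) ⊗ₖ C = A ⊗ₖ C - B ⊗ₖ C := by
  ext ⟨i, k⟩ ⟨j, l⟩; simp [Matrix.kroneckerMap_apply, sub_mul]

theorem kronecker_bracket_closed
    (At Bt Ac Bc : Matrix (Fin 3 ⊕ Fin 3) (Fin 3 ⊕ Fin 3) ℝ)
    (hAt : At.IsSymm) (hBt : Bt.IsSymm) (hAc : Acᵀ = -Ac) (hBc : Bcᵀ = -Bc) :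
    letI J6 := Matrix.J (Fin 3) ℝ
    letI I4 : Matrix (Fin 4) (Fin 4) ℝ := 1
    letI M := At ⊗ₖ I4 + Ac ⊗ₖ Kmat
    letI N := Bt ⊗ₖ I4 + Bc ⊗ₖ Kmat
    letI JJ := J6 ⊗ₖ I4
    M * JJ * N - N * JJ * M =
      (2 : ℝ) • ((symPart (At * J6 * Bt - Ac * J6 * Bc)) ⊗ₖ I4
        + (skewPart (Ac * J6 * Bt + At * J6 * Bc)) ⊗ₖ Kmat) := by
  simp only [symPart, skewPart, Matrix.transpose_sub, Matrix.transpose_add,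
    Matrix.transpose_mul, Matrix.J_transpose, hAt.eq, hBt.eq, hAc, hBc,
    Matrix.add_mul, Matrix.mul_add, ← Matrix.mul_kronecker_mul, Matrix.mul_one,
    Matrix.one_mul, Kmat_sq, Matrix.neg_mul, Matrix.mul_neg, neg_neg,
    kron_neg, neg_kron, Matrix.smul_kronecker, sub_kron, Matrix.add_kronecker,
    smul_add, smul_sub, smul_smul, smul_neg]
  norm_num
  simp only [← Matrix.mul_assoc]
  abel

end
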